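/- Let d: ℝ^m_{≥0} → ℝ_{≥0} be convex and non-decreasing, and for B > 0 let h(p, B) = min { d(y) : y ≥ 0, ⟨p, y⟩ = B } be the indirect disutility (for p ≥ 0, p ≠ 0). Then for any x ∈ ℝ^m_{≥0} with x ≠ 0 and any B > 0, d(x) = max { h(p, B) : p ≥ 0, ⟨p, x⟩ = B }. -/

import Mathlib

private lemma stmt9_aux {a b u v U V : ℝ} (ha : 0 ≤ a) (hb : 0 ≤ b) (hab : a + b = 1)
    (hu : u < U) (hv : v < V) : a * u + b * v < a * U + b * V := by
  rcases eq_or_lt_of_le ha with rfl | ha'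
  · simp only [zero_mul, zero_add]
    have hb1 : b = 1 := by linarith
    simpa [hb1] using hv
  · exact add_lt_add_of_lt_of_le (mul_lt_mul_of_pos_left hu ha')
      (mul_le_mul_of_nonneg_left hv.le hb)

set_option maxHeartbeats 1000000 in
theorem stmt9 {m : ℕ} (d : (Fin m → ℝ) → ℝ) (B : ℝ) (hB : 0 < B)
    (hnn : ∀ x : Fin m → ℝ, 0 ≤ x → 0 ≤ d x)
    (hconv : ConvexOn ℝ {x : Fin m → ℝ | 0 ≤ x} d)
    (hmono : ∀ x y : Fin m → ℝ, 0 ≤ y → y ≤ x → d y ≤ d x)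
    (h : (Fin m → ℝ) → ℝ)
    (hh : ∀ p : Fin m → ℝ, 0 ≤ p → p ≠ 0 →
      IsLeast {t : ℝ | ∃ y : Fin m → ℝ, 0 ≤ y ∧ ∑ j, p j * y j = B ∧ d y = t} (h p))
    (x : Fin m → ℝ) (hx : 0 ≤ x) (hx0 : x ≠ 0) :
    IsGreatest {t : ℝ | ∃ p : Fin m → ℝ, 0 ≤ p ∧ ∑ j, p j * x j = B ∧ h p = t} (d x) := by
  classical
  constructor
  · -- membership
    by_cases hL : ∃ y₀ : Fin m → ℝ, 0 ≤ y₀ ∧ d y₀ < d x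
    · obtain ⟨y₀, hy₀, hy₀lt⟩ := hL
      have hd0 : d 0 < d x := lt_of_le_of_lt (hmono y₀ 0 le_rfl hy₀) hy₀lt
      set M : Set (Fin m → ℝ) :=
        {z | ∃ y : Fin m → ℝ, 0 ≤ y ∧ d y < d x ∧ ∀ j, z j < y j} with hMdef
      have hMopen : IsOpen M := by
        have : M = ⋃ y ∈ {y : Fin m → ℝ | 0 ≤ y ∧ d y < d x},
            Set.pi Set.univ (fun j => Set.Iio (y j)) := by
          ext z
          simp [hMdef, Set.mem_pi]
          tauto
        rw [this]
        exact isOpen_biUnion fun y _ =>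
          isOpen_set_pi Set.finite_univ (fun j _ => isOpen_Iio)
      have hMconv : Convex ℝ M := by
        rintro z₁ ⟨y₁, hy₁, hd₁, hlt₁⟩ z₂ ⟨y₂, hy₂, hd₂, hlt₂⟩ a b ha hb hab
        refine ⟨a • y₁ + b • y₂, add_nonneg (smul_nonneg ha hy₁) (smul_nonneg hb hy₂), ?_, ?_⟩
        · have hcx := hconv.2 hy₁ hy₂ ha hb hab
          have h2 : a * d y₁ + b * d y₂ < a * d x + b * d x :=
            stmt9_aux ha hb hab hd₁ hd₂
          have h3 : a * d x + b * d x = d x := by rw [← add_mul, hab, one_mul]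
          calc d (a • y₁ + b • y₂) ≤ a * d y₁ + b * d y₂ := hcx
            _ < d x := h3 ▸ h2
        · intro j
          simp only [Pi.add_apply, Pi.smul_apply, smul_eq_mul]
          exact stmt9_aux ha hb hab (hlt₁ j) (hlt₂ j)
      have hxM : x ∉ M := by
        rintro ⟨y, hy, hdy, hlt⟩
        exact absurd (hmono y x hx (fun j => (hlt j).le)) (not_le.2 hdy)
      obtain ⟨f, hsep⟩ := geometric_hahn_banach_open_point hMconv hMopen hxM
      set q : Fin m → ℝ := fun i => f (fun j => if i = j then (1:ℝ) else 0) with hqdef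
      have hfq : ∀ y : Fin m → ℝ, f y = ∑ j, q j * y j := by
        intro y
        conv_lhs => rw [pi_eq_sum_univ y]
        rw [map_sum]
        refine Finset.sum_congr rfl fun j _ => ?_
        rw [map_smul]
        simp [hqdef, mul_comm]
      have hfneg : f (fun _ => (-1:ℝ)) < f x :=
        hsep _ ⟨0, le_rfl, hd0, fun j => by norm_num⟩
      -- q is nonnegative
      have hqnn : ∀ i, 0 ≤ q i := by
        intro i
        by_contra hqi
        push_neg at hqi
        set t : ℝ := (f x - f (fun _ => (-1:ℝ)) + 1) / (-q i) with htdef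
        have ht : 0 < t := div_pos (by linarith) (by linarith)
        have hzM : ((fun _ => (-1:ℝ)) + (-t) • fun j => if i = j then (1:ℝ) else 0) ∈ M := by
          refine ⟨0, le_rfl, hd0, fun j => ?_⟩
          simp only [Pi.add_apply, Pi.smul_apply, smul_eq_mul, Pi.zero_apply]
          by_cases hij : i = j <;> simp [hij] <;> linarith
        have hlt := hsep _ hzM
        rw [map_add, map_smul] at hlt
        have hcomp : (-t) * q i = f x - f (fun _ => (-1:ℝ)) + 1 := by
          have hne : -q i ≠ 0 := by linarith
          calc (-t) * q i = t * (-q i) := by ring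
            _ = f x - f (fun _ => (-1:ℝ)) + 1 := by
                rw [htdef, div_mul_cancel₀ _ hne]
        simp only [smul_eq_mul] at hlt
        rw [hcomp] at hlt
        linarith
      -- For all y in the lower contour set, f y ≤ f x
      have hle : ∀ y : Fin m → ℝ, 0 ≤ y → d y < d x → f y ≤ f x := by
        intro y hy hdy
        have key : ∀ δ : ℝ, 0 < δ → f y < f x + δ := by
          intro δ hδ
          set c1 : ℝ := f (fun _ => (1:ℝ)) with hc1
          set K : ℝ := max c1 1 with hK
          have hKpos : (0:ℝ) < K := lt_of_lt_of_le one_pos (le_max_right _ _)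
          set ε : ℝ := δ / K with hε
          have hεpos : 0 < ε := div_pos hδ hKpos
          have hzM : (y - ε • fun _ => (1:ℝ)) ∈ M := by
            refine ⟨y, hy, hdy, fun j => ?_⟩
            simp only [Pi.sub_apply, Pi.smul_apply, smul_eq_mul, mul_one]
            linarith
          have h1 := hsep _ hzM
          rw [map_sub, map_smul] at h1
          simp only [smul_eq_mul] at h1
          have h3 : ε * c1 ≤ ε * K := mul_le_mul_of_nonneg_left (le_max_left _ _) hεpos.le
          have h4 : ε * K = δ := div_mul_cancel₀ _ (ne_of_gt hKpos)
          linarith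
        by_contra hcon
        push_neg at hcon
        have := key ((f y - f x) / 2) (by linarith)
        linarith
      have hfxnn : 0 ≤ f x := by
        rw [hfq x]
        exact Finset.sum_nonneg fun j _ => mul_nonneg (hqnn j) (hx j)
      have hfxpos : 0 < f x := by
        rcases hfxnn.lt_or_eq with h' | h'
        · exact h'
        exfalso
        -- f x = 0; get i with q i > 0
        have hqne : ∃ i, q i ≠ 0 := by
          by_contra hq0
          push_neg at hq0
          have : f (fun _ => (-1:ℝ)) = 0 := by
            rw [hfq]
            simp [hq0]
          have hfx0 : f x = 0 := by rw [hfq]; simp [hq0]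
          rw [this, hfx0] at hfneg
          exact lt_irrefl 0 hfneg
        obtain ⟨i, hi⟩ := hqne
        have hqi : 0 < q i := (hqnn i).lt_of_ne (Ne.symm hi)
        set e : Fin m → ℝ := fun j => if i = j then (1:ℝ) else 0 with hedef
        have he : (0:Fin m → ℝ) ≤ e := fun j => by by_cases hij : i = j <;> simp [hedef, hij]
        set K : ℝ := |d e - d 0| + 1 with hKdef
        have hKpos : 0 < K := by positivity
        set ε : ℝ := min 1 ((d x - d 0) / (2 * K)) with hεdef
        have hεpos : 0 < ε := lt_min one_pos (div_pos (by linarith) (by linarith))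
        have hε1 : ε ≤ 1 := min_le_left _ _
        have hdεe : d (ε • e) < d x := by
          have hcx := hconv.2 (Set.mem_setOf.2 (le_refl (0 : Fin m → ℝ)))
            (Set.mem_setOf.2 he) (by linarith : (0:ℝ) ≤ 1 - ε) hεpos.le (by ring)
          have heq : (1 - ε) • (0 : Fin m → ℝ) + ε • e = ε • e := by simp
          rw [heq] at hcx
          simp only [smul_eq_mul] at hcx
          have hb1 : ε * (d e - d 0) ≤ ε * K :=
            mul_le_mul_of_nonneg_left (by rw [hKdef]; nlinarith [le_abs_self (d e - d 0)]) hεpos.le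
          have hb2 : ε * K ≤ (d x - d 0) / (2 * K) * K :=
            mul_le_mul_of_nonneg_right (min_le_right _ _) hKpos.le
          have hb3 : (d x - d 0) / (2 * K) * K = (d x - d 0) / 2 := by
            field_simp
          nlinarith
        have hfe : f (ε • e) ≤ f x := hle _ (smul_nonneg hεpos.le he) hdεe
        have hfe2 : f (ε • e) = ε * q i := by
          rw [map_smul]
          simp [hqdef, hedef]
        rw [hfe2, ← h'] at hfe
        nlinarith
      -- the price vector
      set c : ℝ := f x with hcdef
      set p : Fin m → ℝ := fun j => (B / c) * q j with hpdef
      have hpnn : 0 ≤ p := fun j => mul_nonneg (div_nonneg hB.le hfxpos.le) (hqnn j)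
      have hsum : ∀ y : Fin m → ℝ, ∑ j, p j * y j = (B / c) * f y := by
        intro y
        rw [hfq y, Finset.mul_sum]
        exact Finset.sum_congr rfl fun j _ => by rw [hpdef]; ring
      have hsumx : ∑ j, p j * x j = B := by
        rw [hsum x, ← hcdef]
        field_simp
      have hpne : p ≠ 0 := by
        intro hp0
        rw [hp0] at hsumx
        simp at hsumx
        linarith
      obtain ⟨⟨y, hy, hsumy, hdy⟩, hlb⟩ := hh p hpnn hpne
      have h1 : h p ≤ d x := hlb ⟨x, hx, hsumx, rfl⟩
      have h2 : d x ≤ h p := by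
        rw [← hdy]
        by_contra hcon
        push_neg at hcon
        -- d y < d x, so y ∈ L and f y = c
        have hfy : f y = c := by
          rw [hsum y] at hsumy
          field_simp at hsumy
          linarith
        set K : ℝ := |d ((2:ℝ) • y) - d y| + 1 with hKdef
        have hKpos : 0 < K := by positivity
        set t : ℝ := min 1 ((d x - d y) / (2 * K)) with htdef
        have ht0 : 0 < t := lt_min one_pos (div_pos (by linarith) (by linarith))
        have ht1 : t ≤ 1 := min_le_left _ _
        have h2y : (0:Fin m → ℝ) ≤ (2:ℝ) • y := smul_nonneg (by norm_num) hy
        have hcx := hconv.2 (Set.mem_setOf.2 hy) (Set.mem_setOf.2 h2y)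
          (by linarith : (0:ℝ) ≤ 1 - t) ht0.le (by ring)
        have heq : (1 - t) • y + t • ((2:ℝ) • y) = (1 + t) • y := by
          funext j
          simp only [Pi.add_apply, Pi.smul_apply, smul_eq_mul]
          ring
        rw [heq] at hcx
        simp only [smul_eq_mul] at hcx
        have hb1 : t * (d ((2:ℝ) • y) - d y) ≤ t * K :=
          mul_le_mul_of_nonneg_left (by rw [hKdef]; nlinarith [le_abs_self (d ((2:ℝ) • y) - d y)]) ht0.le
        have hb2 : t * K ≤ (d x - d y) / (2 * K) * K :=
          mul_le_mul_of_nonneg_right (min_le_right _ _) hKpos.le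
        have hb3 : (d x - d y) / (2 * K) * K = (d x - d y) / 2 := by
          field_simp
        have hdz : d ((1 + t) • y) < d x := by nlinarith
        have hz0 : (0:Fin m → ℝ) ≤ (1 + t) • y := smul_nonneg (by linarith) hy
        have hfz : f ((1 + t) • y) ≤ f x := hle _ hz0 hdz
        rw [map_smul] at hfz
        simp only [smul_eq_mul] at hfz
        rw [hfy] at hfz
        nlinarith
      exact ⟨p, hpnn, hsumx, le_antisymm h1 h2⟩
    · -- Case A: d x is a global min on the nonneg orthant
      push_neg at hL
      obtain ⟨i, hxi⟩ : ∃ i, x i ≠ 0 := by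
        by_contra hall
        push_neg at hall
        exact hx0 (funext hall)
      have hxi' : 0 < x i := (hx i).lt_of_ne (Ne.symm hxi)
      set p : Fin m → ℝ := fun j => if j = i then B / x i else 0 with hpdef
      have hpnn : 0 ≤ p := by
        intro j
        by_cases hij : j = i <;> simp [hpdef, hij]
        positivity
      have hsumx : ∑ j, p j * x j = B := by
        rw [hpdef]
        rw [Finset.sum_eq_single i]
        · field_simp
          rw [if_pos trivial]
          field_simp
        · intro b _ hb; simp [hb]
        · intro hne; exact absurd (Finset.mem_univ i) hne
      have hpne : p ≠ 0 := by
        intro hp0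
        rw [hp0] at hsumx
        simp at hsumx
        linarith
      obtain ⟨⟨y, hy, hsumy, hdy⟩, hlb⟩ := hh p hpnn hpne
      have h1 : h p ≤ d x := hlb ⟨x, hx, hsumx, rfl⟩
      have h2 : d x ≤ h p := hdy ▸ hL y hy
      exact ⟨p, hpnn, hsumx, le_antisymm h1 h2⟩
  · -- upper bound
    rintro t ⟨p, hp, hpx, rfl⟩
    have hpne : p ≠ 0 := by
      intro hp0
      rw [hp0] at hpx
      simp at hpx
      linarith
    exact (hh p hp hpne).2 ⟨x, hx, hpx, rfl⟩
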